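/- For every pair of integers n, j with n ≥ 3 and 1 ≤ j ≤ n−2, one has (e^{−2}/(4n³))·(n^{1−j/n}·κ(j/n))^n ≤ A5(n,j) ≤ 2·(n^{1−j/n}·κ(j/n))^n. -/

import Mathlib

set_option maxHeartbeats 8000000


lemma aux_exp_key (k : ℕ) (hk : 1 ≤ k) :
    Real.exp 1 * (k:ℝ) ^ (k+1) ≤ ((k:ℝ)+1) ^ (k+1) := by
  have hkR : (1:ℝ) ≤ (k:ℝ) := by exact_mod_cast hk
  have hne : ((k:ℝ)+1) ≠ 0 := by positivity
  have h1 : (k:ℝ)/((k:ℝ)+1) ≤ Real.exp (-(1/((k:ℝ)+1))) := by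
    have h := Real.add_one_le_exp (-(1/((k:ℝ)+1)))
    have he : (k:ℝ)/((k:ℝ)+1) = -(1/((k:ℝ)+1)) + 1 := by field_simp; ring
    linarith
  have h2 : ((k:ℝ)/((k:ℝ)+1)) ^ (k+1) ≤ Real.exp (-(1/((k:ℝ)+1))) ^ (k+1) :=
    pow_le_pow_left₀ (by positivity) h1 (k+1)
  have h3 : Real.exp (-(1/((k:ℝ)+1))) ^ (k+1) = Real.exp (-1) := by
    rw [← Real.exp_nat_mul]
    congr 1
    push_cast
    field_simp
  rw [h3] at h2
  have h4 : ((k:ℝ)/((k:ℝ)+1)) ^ (k+1) = (k:ℝ)^(k+1) / ((k:ℝ)+1)^(k+1) := div_pow _ _ _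
  rw [h4] at h2
  have h5 : (k:ℝ)^(k+1) ≤ Real.exp (-1) * ((k:ℝ)+1)^(k+1) := by
    rw [div_le_iff₀ (by positivity)] at h2
    linarith
  have h6 : Real.exp 1 * Real.exp (-1) = 1 := by
    rw [← Real.exp_add]; norm_num
  calc Real.exp 1 * (k:ℝ)^(k+1) ≤ Real.exp 1 * (Real.exp (-1) * ((k:ℝ)+1)^(k+1)) := by
        exact mul_le_mul_of_nonneg_left h5 (Real.exp_pos 1).le
    _ = ((k:ℝ)+1)^(k+1) := by rw [← mul_assoc, h6, one_mul]

lemma aux_fact_ub : ∀ m : ℕ, 1 ≤ m → (m.factorial : ℝ) * Real.exp 1 ^ m ≤ Real.exp 1 * (m : ℝ) ^ (m + 1) := by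
  intro m hm
  induction m with
  | zero => omega
  | succ k ih =>
    rcases Nat.lt_or_ge 1 (k+1) with h | h
    · have hk : 1 ≤ k := by omega
      have IH := ih hk
      have key := aux_exp_key k hk
      have hE : (0:ℝ) < Real.exp 1 := Real.exp_pos 1
      have hkR : (1:ℝ) ≤ (k:ℝ) := by exact_mod_cast hk
      have hfac : ((k+1).factorial : ℝ) = ((k:ℝ)+1) * (k.factorial : ℝ) := by
        rw [Nat.factorial_succ]; push_cast; ring
      calc ((k+1).factorial : ℝ) * Real.exp 1 ^ (k+1)
          = ((k:ℝ)+1) * ((k.factorial : ℝ) * Real.exp 1 ^ k) * Real.exp 1 := by rw [hfac]; ring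
        _ ≤ ((k:ℝ)+1) * (Real.exp 1 * (k:ℝ)^(k+1)) * Real.exp 1 := by
            have : (0:ℝ) ≤ ((k:ℝ)+1) := by positivity
            nlinarith [mul_le_mul_of_nonneg_left IH this]
        _ ≤ ((k:ℝ)+1) * (((k:ℝ)+1)^(k+1)) * Real.exp 1 := by
            nlinarith [mul_le_mul_of_nonneg_left key (by positivity : (0:ℝ) ≤ (k:ℝ)+1)]
        _ = Real.exp 1 * (((k:ℝ)+1) ^ (k+2)) := by ring
        _ = Real.exp 1 * (((k+1:ℕ):ℝ)) ^ (k+2) := by push_cast; ring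
    · have hk0 : k = 0 := by omega
      subst hk0
      simp [Nat.factorial]

lemma aux_pow_le_exp_fact (m : ℕ) : ((m:ℝ)) ^ m ≤ Real.exp 1 ^ m * (m.factorial : ℝ) := by
  have h := Real.sum_le_exp_of_nonneg (x := (m:ℝ)) (Nat.cast_nonneg m) (m+1)
  have hterm : (m:ℝ)^m / (m.factorial : ℝ) ≤ ∑ i ∈ Finset.range (m+1), (m:ℝ)^i / (i.factorial : ℝ) := by
    exact Finset.single_le_sum (f := fun i => (m:ℝ)^i / (i.factorial : ℝ))
      (fun i _ => by positivity) (Finset.self_mem_range_succ m)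
  have hexp : Real.exp (m:ℝ) = Real.exp 1 ^ m := by
    rw [← Real.exp_nat_mul]; norm_num
  have h2 : (m:ℝ)^m / (m.factorial : ℝ) ≤ Real.exp 1 ^ m := by
    rw [← hexp]; exact hterm.trans h
  rw [div_le_iff₀ (by positivity : (0:ℝ) < (m.factorial : ℝ))] at h2
  linarith

private lemma arithQ1 (a b : ℝ) (ha : 3 ≤ a) (hb : 2 ≤ b) (hab : b + 1 ≤ a) :
    13 - 12*b + 3*b^2 ≤ a*(a-1)*(a-2)*(a+1)/8 := by
  nlinarith [mul_nonneg (by linarith : (0:ℝ) ≤ a-1-b) (by linarith : (0:ℝ) ≤ b-2),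
    mul_nonneg (by linarith : (0:ℝ) ≤ a-3) (by linarith : (0:ℝ) ≤ b-2),
    sq_nonneg (a-3), sq_nonneg (b-2),
    mul_nonneg (by linarith : (0:ℝ) ≤ a-1-b) (by linarith : (0:ℝ) ≤ a-3)]

private lemma arithKpos (a b : ℝ) (ha : 3 ≤ a) (hb : 2 ≤ b) (hab : b + 1 ≤ a) :
    0 < a*(a-1)/2 + 1 - b := by nlinarith [sq_nonneg (a-2)]

private lemma arithDen (a b : ℝ) (ha : 3 ≤ a) (hb : 2 ≤ b) (hab : b + 1 ≤ a) :
    0 < a^2 - a - 2*b + 2 := by nlinarith [sq_nonneg (a-2)]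

private lemma arithHarg (a b : ℝ) (ha : 4 ≤ a) (hb : 2 ≤ b) (hab : b + 1 ≤ a) :
    b*(a + 2*b - 2)*5 ≤ 16*(a^2 - a - 2*b + 2) := by
  nlinarith [mul_nonneg (by linarith : (0:ℝ) ≤ a-1-b) (by linarith : (0:ℝ) ≤ b-2),
    sq_nonneg (2*a-13),
    mul_nonneg (by linarith : (0:ℝ) ≤ a-1-b) (by linarith : (0:ℝ) ≤ a-4),
    mul_nonneg (by linarith : (0:ℝ) ≤ b-2) (by linarith : (0:ℝ) ≤ a-4),
    sq_nonneg (a-b)]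

private lemma arithKEY1 (a b : ℝ) (ha : 3 ≤ a) (hb : 2 ≤ b) (hab : b + 1 ≤ a) :
    3*b*(a+1)*(8*a) ≤ 1*(32*a^3) := by nlinarith [sq_nonneg a, sq_nonneg (a-1)]

private lemma exp_three_lt : Real.exp (3:ℝ) < 20.09 := by
  have h : Real.exp (3:ℝ) = Real.exp 1^3 := by rw [← Real.exp_nat_mul]; norm_num
  rw [h]
  calc Real.exp 1^3 < (2.7182818286:ℝ)^3 := by
        apply pow_lt_pow_left₀ Real.exp_one_lt_d9 (Real.exp_pos 1).le; norm_num
    _ < 20.09 := by norm_num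

private lemma exp_fifth : Real.exp (1/5:ℝ) ≤ 5/4 := by
  have h := Real.add_one_le_exp (-(1/5):ℝ)
  have h2 : Real.exp (-(1/5):ℝ) * Real.exp (1/5:ℝ) = 1 := by rw [← Real.exp_add]; norm_num
  nlinarith [Real.exp_pos (1/5:ℝ), Real.exp_pos (-(1/5):ℝ)]

private lemma exp_165 : Real.exp (16/5:ℝ) ≤ 26 := by
  have h : Real.exp (16/5:ℝ) = Real.exp 3 * Real.exp (1/5:ℝ) := by
    rw [← Real.exp_add]; norm_num
  rw [h]
  nlinarith [exp_three_lt, exp_fifth, Real.exp_pos (1/5:ℝ), Real.exp_pos (3:ℝ)]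

private lemma e1_lemma (a b E : ℝ) (ha : a ≠ 0) (hb : b ≠ 0) (hE : E ≠ 0) (ha1 : a+1 ≠ 0)
    (hexp : Real.exp (-2:ℝ) = (E^2)⁻¹) (k : ℕ) :
    Real.exp (-2:ℝ)/(4*a^3) * (E*a^2/(2*b))^k
      = (3*b*(a+1)/(32*a^3)) * ((a^2/2)^k * E^k / (E^2 * b^(k+1)) * (8/(3*(a+1)))) := by
  rw [hexp, show E*a^2/(2*b) = (a^2/2)*(E/b) by field_simp, mul_pow, div_pow]
  field_simp
  rw [div_pow]
  field_simp
  ring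

private lemma e2_lemma (a b E R K : ℝ) (hb : b ≠ 0) (hE : E ≠ 0) (ha1 : a+1 ≠ 0)
    (hexp : Real.exp (-1:ℝ) = E⁻¹) (hK : K = R*(a^2/2)) (k : ℕ) :
    (K^k * E^k / (E * b^(k+1))) * (Real.exp (-1) * (8/(3*(a+1))))
      = R^k * ((a^2/2)^k * E^k / (E^2 * b^(k+1)) * (8/(3*(a+1)))) := by
  rw [hexp, hK, mul_pow]
  field_simp



noncomputable def mu5 (n j : ℕ) : ℝ :=
  ((n - j).choose 2 : ℝ) * (Nat.choose n 3 : ℝ) / ((Nat.choose n 2).choose 2 : ℝ)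

noncomputable def d5 (n j : ℕ) : ℝ :=
  let N : ℝ := (Nat.choose n 2 : ℝ)
  let m : ℝ := ((n - j : ℕ) : ℝ)
  let CN2 : ℝ := ((Nat.choose n 2).choose 2 : ℝ)
  let P : ℝ := 2 * (Nat.choose n 3 : ℝ) / CN2
  let Q : ℝ := (13 - 12 * m + 3 * m ^ 2) / CN2
  let R : ℝ := 8 * (Nat.choose n 3 : ℝ) / CN2
  let S : ℝ := 6 * (Nat.choose n 4 : ℝ) / ((Nat.choose n 3 : ℝ) * (N - 2))
  let T : ℝ := (5 * (n : ℝ) - 11) / (4 * (N - 2))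
  P + Q + (1 - Q) * (m - 2) * (R + S + T)

noncomputable def D5 (n j : ℕ) : ℝ :=
  min (d5 n j) (min (2 * mu5 n j * d5 n j) 1)

noncomputable def kappa (x : ℝ) : ℝ := (Real.exp 1 / 2) ^ (1 - x) * (1 - x) ^ (-(1 - x))

noncomputable def A5 (n j : ℕ) : ℝ :=
  ((Nat.choose n 2).choose (n - j) : ℝ) *
    Real.exp (-(2 * mu5 n j)) * (1 + Real.exp (2 * mu5 n j) * D5 n j)

theorem stmt_14 (n j : ℕ) (hn : 3 ≤ n) (hj1 : 1 ≤ j) (hj2 : j ≤ n - 2) :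
    Real.exp (-2) / (4 * (n : ℝ) ^ 3) *
        ((n : ℝ) ^ (1 - (j : ℝ) / n) * kappa ((j : ℝ) / n)) ^ n ≤ A5 n j ∧
    A5 n j ≤ 2 * ((n : ℝ) ^ (1 - (j : ℝ) / n) * kappa ((j : ℝ) / n)) ^ n := by
  obtain ⟨m, hmdef⟩ : ∃ m, m = n - j := ⟨n - j, rfl⟩
  have hm2 : 2 ≤ m := by omega
  have hmn : m + 1 ≤ n := by omega
  have hrn3 : (3:ℝ) ≤ (n:ℝ) := by exact_mod_cast hn
  have hrm2 : (2:ℝ) ≤ (m:ℝ) := by exact_mod_cast hm2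
  have hrmn : (m:ℝ) + 1 ≤ (n:ℝ) := by exact_mod_cast hmn
  have hrn0 : (0:ℝ) < (n:ℝ) := by linarith
  have hrm0 : (0:ℝ) < (m:ℝ) := by linarith
  have hN : ((n.choose 2 : ℕ) : ℝ) = (n:ℝ)*((n:ℝ)-1)/2 := Nat.cast_choose_two (K := ℝ) n
  have hNN : (((n.choose 2).choose 2 : ℕ) : ℝ) = (n:ℝ)*((n:ℝ)-1)*((n:ℝ)-2)*((n:ℝ)+1)/8 := by
    rw [Nat.cast_choose_two, hN]; ring
  have hC3 : ((n.choose 3 : ℕ) : ℝ) = (n:ℝ)*((n:ℝ)-1)*((n:ℝ)-2)/6 := by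
    have hd : n.descFactorial 3 = Nat.factorial 3 * n.choose 3 :=
      Nat.descFactorial_eq_factorial_mul_choose n 3
    have hd2 : n.descFactorial 3 = (n-2)*((n-1)*(n*1)) := by
      simp [Nat.descFactorial_succ, Nat.descFactorial_zero]
    have hnat : 6 * n.choose 3 = (n-2)*((n-1)*(n*1)) := by
      rw [← hd2, hd]; norm_num [Nat.factorial]
    have hcast := congrArg (fun t : ℕ => (t:ℝ)) hnat
    push_cast [Nat.cast_sub (by omega : 2 ≤ n), Nat.cast_sub (by omega : 1 ≤ n)] at hcast
    linarith
  have hCm : ((m.choose 2 : ℕ) : ℝ) = (m:ℝ)*((m:ℝ)-1)/2 := Nat.cast_choose_two (K := ℝ) m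
  have hn1 : (0:ℝ) < (n:ℝ)-1 := by linarith
  have hn2 : (0:ℝ) < (n:ℝ)-2 := by linarith
  have hn3' : (0:ℝ) < (n:ℝ)+1 := by linarith
  have hmu : mu5 n j = 2*(m:ℝ)*((m:ℝ)-1)/(3*((n:ℝ)+1)) := by
    unfold mu5
    rw [← hmdef, hCm, hC3, hNN]
    field_simp
    ring
  have hNNpos : (0:ℝ) < ((n.choose 2).choose 2 : ℝ) := by
    rw [hNN]; exact div_pos (by positivity) (by norm_num)
  have hC3pos : (0:ℝ) < (n.choose 3:ℝ) := by
    rw [hC3]; exact div_pos (by positivity) (by norm_num)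
  have hNm2 : (0:ℝ) < (n.choose 2:ℝ) - 2 := by rw [hN]; nlinarith
  have hP : 2 * (n.choose 3 : ℝ) / ((n.choose 2).choose 2 : ℝ) = 8/(3*((n:ℝ)+1)) := by
    rw [hC3, hNN, div_eq_div_iff (ne_of_gt (div_pos (by positivity) (by norm_num)))
      (ne_of_gt (by positivity : (0:ℝ) < 3*((n:ℝ)+1)))]; ring
  have hQ0 : 0 ≤ (13 - 12*(m:ℝ) + 3*(m:ℝ)^2) / ((n.choose 2).choose 2 : ℝ) := by
    apply div_nonneg _ hNNpos.le; nlinarith [sq_nonneg ((m:ℝ)-2)]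
  have hQ1 : (13 - 12*(m:ℝ) + 3*(m:ℝ)^2) / ((n.choose 2).choose 2 : ℝ) ≤ 1 := by
    rw [div_le_one hNNpos, hNN]
    exact arithQ1 _ _ hrn3 hrm2 hrmn
  have hRST0 : 0 ≤ 8 * (n.choose 3 : ℝ) / ((n.choose 2).choose 2 : ℝ)
         + 6 * (n.choose 4 : ℝ) / ((n.choose 3 : ℝ) * ((n.choose 2 : ℝ) - 2))
         + (5*(n:ℝ) - 11) / (4 * ((n.choose 2 : ℝ) - 2)) := by
    have h1 : (0:ℝ) ≤ 8 * (n.choose 3 : ℝ) / ((n.choose 2).choose 2 : ℝ) :=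
      div_nonneg (by positivity) hNNpos.le
    have h2 : (0:ℝ) ≤ 6 * (n.choose 4 : ℝ) / ((n.choose 3 : ℝ) * ((n.choose 2 : ℝ) - 2)) :=
      div_nonneg (by positivity) (mul_nonneg hC3pos.le hNm2.le)
    have h3 : (0:ℝ) ≤ (5*(n:ℝ) - 11) / (4 * ((n.choose 2 : ℝ) - 2)) :=
      div_nonneg (by linarith) (by linarith)
    linarith
  have hd5eq : d5 n j =
      2 * (n.choose 3 : ℝ) / ((n.choose 2).choose 2 : ℝ)
      + (13 - 12*(m:ℝ) + 3*(m:ℝ)^2) / ((n.choose 2).choose 2 : ℝ)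
      + (1 - (13 - 12*(m:ℝ) + 3*(m:ℝ)^2) / ((n.choose 2).choose 2 : ℝ)) * ((m:ℝ) - 2) *
        (8 * (n.choose 3 : ℝ) / ((n.choose 2).choose 2 : ℝ)
         + 6 * (n.choose 4 : ℝ) / ((n.choose 3 : ℝ) * ((n.choose 2 : ℝ) - 2))
         + (5*(n:ℝ) - 11) / (4 * ((n.choose 2 : ℝ) - 2))) := by rw [hmdef]; rfl
  have hd5P : 8/(3*((n:ℝ)+1)) ≤ d5 n j := by
    rw [hd5eq, ← hP]
    have := mul_nonneg (mul_nonneg (by linarith : (0:ℝ) ≤ 1 - (13 - 12*(m:ℝ) + 3*(m:ℝ)^2) / ((n.choose 2).choose 2 : ℝ)) (by linarith : (0:ℝ) ≤ (m:ℝ)-2)) hRST0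
    linarith
  have hp1 : 8/(3*((n:ℝ)+1)) ≤ 1 := by rw [div_le_one (by linarith)]; linarith
  have hp0 : (0:ℝ) < 8/(3*((n:ℝ)+1)) := by positivity
  have hmu0 : 0 ≤ mu5 n j := by rw [hmu]; apply div_nonneg; nlinarith; linarith
  have hd50 : 0 < d5 n j := lt_of_lt_of_le hp0 hd5P
  have hD5le1 : D5 n j ≤ 1 := le_trans (min_le_right _ _) (min_le_right _ _)
  have hD50 : 0 ≤ D5 n j :=
    le_min hd50.le (le_min (mul_nonneg (by linarith) hd50.le) one_pos.le)
  have hED : Real.exp (-1) * (8/(3*((n:ℝ)+1))) ≤ Real.exp (-(2 * mu5 n j)) + D5 n j := by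
    rcases le_or_gt (2 * mu5 n j) 1 with h | h
    · have hE : Real.exp (-1) ≤ Real.exp (-(2*mu5 n j)) := Real.exp_le_exp.2 (by linarith)
      nlinarith [Real.exp_pos (-1)]
    · have hD : 8/(3*((n:ℝ)+1)) ≤ D5 n j := by
        refine le_min hd5P (le_min ?_ hp1)
        nlinarith [mul_nonneg (by linarith : (0:ℝ) ≤ 2*mu5 n j - 1) hd50.le]
      have hle1 : Real.exp (-1) ≤ 1 := Real.exp_le_one_iff.mpr (by norm_num)
      linarith [Real.exp_pos (-(2*mu5 n j)), mul_nonneg (sub_nonneg.2 hle1) hp0.le]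
  have hA5 : A5 n j = ((n.choose 2).choose m : ℝ) * (Real.exp (-(2*mu5 n j)) + D5 n j) := by
    unfold A5
    rw [← hmdef, Real.exp_neg]
    have hx : Real.exp (2*mu5 n j) ≠ 0 := ne_of_gt (Real.exp_pos _)
    field_simp
    try exact Or.inl trivial
  have hmN : m ≤ n.choose 2 := by
    have h1 : (n-1) * 2 ≤ (n-1) * n := Nat.mul_le_mul_left _ (by omega)
    have h2 : n - 1 ≤ n*(n-1)/2 := (Nat.le_div_iff_mul_le (by norm_num)).mpr
      (h1.trans_eq (Nat.mul_comm _ _))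
    rw [Nat.choose_two_right]; omega
  have hE1 : (0:ℝ) < Real.exp 1 := Real.exp_pos 1
  have hCub : ((n.choose 2).choose m : ℝ) ≤ (Real.exp 1 * (n:ℝ)^2/(2*(m:ℝ)))^m := by
    have h1 : ((n.choose 2).choose m : ℝ) ≤ ((n.choose 2:ℕ):ℝ)^m / (m.factorial:ℝ) := by
      have := Nat.choose_le_pow_div (α := ℝ) m (n.choose 2)
      push_cast at this ⊢
      exact this
    have h2 : ((n.choose 2:ℕ):ℝ)^m ≤ ((n:ℝ)^2/2)^m := by
      apply pow_le_pow_left₀ (Nat.cast_nonneg _)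
      rw [hN]; nlinarith
    have h3 : ((n:ℝ)^2/2)^m / (m.factorial:ℝ) ≤ ((n:ℝ)^2/2)^m * (Real.exp 1^m/(m:ℝ)^m) := by
      have key : (1:ℝ)/(m.factorial:ℝ) ≤ Real.exp 1^m/(m:ℝ)^m := by
        rw [div_le_div_iff₀ (by positivity) (by positivity)]
        have h4 := aux_pow_le_exp_fact m
        nlinarith
      calc ((n:ℝ)^2/2)^m / (m.factorial:ℝ) = ((n:ℝ)^2/2)^m * ((1:ℝ)/(m.factorial:ℝ)) := by ring
        _ ≤ ((n:ℝ)^2/2)^m * (Real.exp 1^m/(m:ℝ)^m) :=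
            mul_le_mul_of_nonneg_left key (by positivity)
    have h5 : ((n:ℝ)^2/2)^m * (Real.exp 1^m/(m:ℝ)^m) = (Real.exp 1 * (n:ℝ)^2/(2*(m:ℝ)))^m := by
      rw [show Real.exp 1 * (n:ℝ)^2/(2*(m:ℝ)) = ((n:ℝ)^2/2) * (Real.exp 1/(m:ℝ)) by
        field_simp, mul_pow, div_pow, div_pow]
    calc ((n.choose 2).choose m : ℝ) ≤ ((n.choose 2:ℕ):ℝ)^m / (m.factorial:ℝ) := h1
      _ ≤ ((n:ℝ)^2/2)^m / (m.factorial:ℝ) := by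
          exact (div_le_div_iff_of_pos_right (by positivity)).mpr h2
      _ ≤ ((n:ℝ)^2/2)^m * (Real.exp 1^m/(m:ℝ)^m) := h3
      _ = (Real.exp 1 * (n:ℝ)^2/(2*(m:ℝ)))^m := h5
  have hupper : A5 n j ≤ 2 * (Real.exp 1 * (n:ℝ)^2/(2*(m:ℝ)))^m := by
    rw [hA5]
    have hEle : Real.exp (-(2*mu5 n j)) ≤ 1 := Real.exp_le_one_iff.mpr (by linarith)
    calc ((n.choose 2).choose m : ℝ) * (Real.exp (-(2*mu5 n j)) + D5 n j)
        ≤ ((n.choose 2).choose m : ℝ) * 2 :=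
          mul_le_mul_of_nonneg_left (by linarith) (Nat.cast_nonneg _)
      _ ≤ 2 * (Real.exp 1 * (n:ℝ)^2/(2*(m:ℝ)))^m := by linarith [hCub]
  have hKdef : ((n.choose 2 + 1 - m : ℕ) : ℝ) = (n.choose 2 : ℝ) + 1 - (m:ℝ) := by
    have hle : m ≤ n.choose 2 + 1 := by omega
    push_cast [Nat.cast_sub hle]
    ring
  have hClb : ((n.choose 2:ℝ) + 1 - (m:ℝ))^m / (m.factorial:ℝ) ≤ ((n.choose 2).choose m : ℝ) := by
    have h := Nat.pow_le_choose (α := ℝ) m (n.choose 2)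
    push_cast [Nat.cast_sub (show m ≤ n.choose 2 + 1 by omega)] at h
    exact h
  have hKpos : (0:ℝ) < (n.choose 2:ℝ) + 1 - (m:ℝ) := by
    rw [hN]; exact arithKpos _ _ hrn3 hrm2 hrmn
  have hDenPos : (0:ℝ) < (n:ℝ)^2 - (n:ℝ) - 2*(m:ℝ) + 2 :=
    arithDen _ _ hrn3 hrm2 hrmn
  obtain ⟨r, hrdef⟩ : ∃ r : ℝ, r = ((n:ℝ)^2 - (n:ℝ) - 2*(m:ℝ) + 2)/(n:ℝ)^2 := ⟨_, rfl⟩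
  have hrpos : 0 < r := by rw [hrdef]; exact div_pos hDenPos (by positivity)
  obtain ⟨q, hqdef⟩ : ∃ q : ℝ, q = ((n:ℝ) + 2*(m:ℝ) - 2)/((n:ℝ)^2 - (n:ℝ) - 2*(m:ℝ) + 2) := ⟨_, rfl⟩
  have hq0 : 0 ≤ q := by rw [hqdef]; exact div_nonneg (by linarith) hDenPos.le
  have h1r : 1 + q = 1/r := by
    rw [hrdef, hqdef, one_div_div, add_div' _ _ _ (ne_of_gt hDenPos),
      div_eq_div_iff (ne_of_gt hDenPos) (ne_of_gt hDenPos)]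
    ring
  have hexpq : Real.exp (-q) ≤ r := by
    have h := Real.add_one_le_exp q
    have h2 : 1/r ≤ Real.exp q := by linarith
    have h3 : 1 ≤ Real.exp q * r := (div_le_iff₀ hrpos).mp h2
    rw [Real.exp_neg]
    have h4 := mul_le_mul_of_nonneg_left h3 (inv_nonneg.mpr (Real.exp_pos q).le)
    have h5 : (Real.exp q)⁻¹ * (Real.exp q * r) = r := by
      field_simp
    linarith
  have hrm_pow : Real.exp (-((m:ℝ)*q)) ≤ r^m := by
    have h := pow_le_pow_left₀ (Real.exp_pos (-q)).le hexpq m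
    rw [← Real.exp_nat_mul] at h
    have he : (m:ℝ) * -q = -((m:ℝ)*q) := by ring
    rwa [he] at h
  have hq' : (m:ℝ)*q = (m:ℝ)*((n:ℝ) + 2*(m:ℝ) - 2)/((n:ℝ)^2 - (n:ℝ) - 2*(m:ℝ) + 2) := by
    rw [hqdef]; ring
  have hexp8n : Real.exp ((m:ℝ)*q) ≤ 8*(n:ℝ) := by
    rcases Nat.lt_or_ge n 4 with h4 | h4
    · have hn3 : n = 3 := by omega
      have hm2' : m = 2 := by omega
      have harg : (m:ℝ)*q ≤ 3 := by
        rw [hq', hm2', hn3]; norm_num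
      calc Real.exp ((m:ℝ)*q) ≤ Real.exp 3 := Real.exp_le_exp.2 harg
        _ ≤ 20.09 := exp_three_lt.le
        _ ≤ 8*(n:ℝ) := by rw [hn3]; norm_num
    · have h4R : (4:ℝ) ≤ (n:ℝ) := by exact_mod_cast h4
      have harg : (m:ℝ)*q ≤ 16/5 := by
        rw [hq', div_le_div_iff₀ hDenPos (by norm_num)]
        have := arithHarg (n:ℝ) (m:ℝ) h4R hrm2 hrmn
        linarith
      calc Real.exp ((m:ℝ)*q) ≤ Real.exp (16/5 : ℝ) := Real.exp_le_exp.2 harg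
        _ ≤ 26 := exp_165
        _ ≤ 8*(n:ℝ) := by linarith
  have hKEY : 3*(m:ℝ)*((n:ℝ)+1)/(32*(n:ℝ)^3) ≤ r^m := by
    have h1 : 3*(m:ℝ)*((n:ℝ)+1)/(32*(n:ℝ)^3) ≤ 1/(8*(n:ℝ)) := by
      rw [div_le_div_iff₀ (by positivity) (by positivity)]
      exact arithKEY1 _ _ hrn3 hrm2 hrmn
    have h2 : 1/(8*(n:ℝ)) ≤ Real.exp (-((m:ℝ)*q)) := by
      have h := one_div_le_one_div_of_le (Real.exp_pos ((m:ℝ)*q)) hexp8n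
      rwa [Real.exp_neg, ← one_div]
    exact h1.trans (h2.trans hrm_pow)
  have hmne : (m:ℝ) ≠ 0 := ne_of_gt hrm0
  have hnne : (n:ℝ) ≠ 0 := ne_of_gt hrn0
  have hEne : Real.exp 1 ≠ 0 := ne_of_gt hE1
  have hn1ne : (n:ℝ)+1 ≠ 0 := ne_of_gt hn3'
  have hfac := aux_fact_ub m (by omega)
  have hClb2 : ((n.choose 2:ℝ) + 1 - (m:ℝ))^m * Real.exp 1^m / (Real.exp 1 * (m:ℝ)^(m+1))
      ≤ ((n.choose 2).choose m : ℝ) := by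
    refine le_trans ?_ hClb
    rw [div_le_div_iff₀ (by positivity) (by positivity)]
    have hK0 : (0:ℝ) ≤ ((n.choose 2:ℝ) + 1 - (m:ℝ))^m := by positivity
    linarith [mul_le_mul_of_nonneg_left hfac hK0]
  have hrK : (n.choose 2:ℝ) + 1 - (m:ℝ) = r * ((n:ℝ)^2/2) := by
    rw [hrdef, hN, div_mul_eq_mul_div, eq_div_iff (by positivity : ((n:ℝ)^2) ≠ 0)]
    ring
  have hG0 : (0:ℝ) ≤ ((n:ℝ)^2/2)^m * Real.exp 1^m / (Real.exp 1^2 * (m:ℝ)^(m+1)) * (8/(3*((n:ℝ)+1))) := by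
    positivity
  have hexp2 : Real.exp (-2:ℝ) = (Real.exp 1^2)⁻¹ := by
    have h : Real.exp 1^2 = Real.exp 2 := by rw [← Real.exp_nat_mul]; norm_num
    rw [h, ← Real.exp_neg]
  have hexpm1 : Real.exp (-1:ℝ) = (Real.exp 1)⁻¹ := by rw [← Real.exp_neg]
  have hstep : Real.exp (-2:ℝ)/(4*(n:ℝ)^3) * (Real.exp 1 * (n:ℝ)^2/(2*(m:ℝ)))^m ≤
      (((n.choose 2:ℝ) + 1 - (m:ℝ))^m * Real.exp 1^m / (Real.exp 1 * (m:ℝ)^(m+1)))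
        * (Real.exp (-1) * (8/(3*((n:ℝ)+1)))) := by
    have e1 := e1_lemma (n:ℝ) (m:ℝ) (Real.exp 1) hnne hmne hEne hn1ne hexp2 m
    have e2 := e2_lemma (n:ℝ) (m:ℝ) (Real.exp 1) r ((n.choose 2:ℝ) + 1 - (m:ℝ))
      hmne hEne hn1ne hexpm1 hrK m
    rw [e1, e2]
    exact mul_le_mul_of_nonneg_right hKEY hG0
  have hlower : Real.exp (-2:ℝ)/(4*(n:ℝ)^3) * (Real.exp 1 * (n:ℝ)^2/(2*(m:ℝ)))^m ≤ A5 n j := by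
    calc Real.exp (-2:ℝ)/(4*(n:ℝ)^3) * (Real.exp 1 * (n:ℝ)^2/(2*(m:ℝ)))^m
        ≤ (((n.choose 2:ℝ) + 1 - (m:ℝ))^m * Real.exp 1^m / (Real.exp 1 * (m:ℝ)^(m+1)))
            * (Real.exp (-1) * (8/(3*((n:ℝ)+1)))) := hstep
      _ ≤ ((n.choose 2).choose m : ℝ) * (Real.exp (-1) * (8/(3*((n:ℝ)+1)))) :=
          mul_le_mul_of_nonneg_right hClb2 (by positivity)
      _ ≤ ((n.choose 2).choose m : ℝ) * (Real.exp (-(2*mu5 n j)) + D5 n j) :=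
          mul_le_mul_of_nonneg_left hED (Nat.cast_nonneg _)
      _ = A5 n j := hA5.symm
  have hBpow : ((n:ℝ) ^ (1 - (j:ℝ)/(n:ℝ)) * kappa ((j:ℝ)/(n:ℝ)))^n
      = (Real.exp 1 * (n:ℝ)^2/(2*(m:ℝ)))^m := by
    have hjr : (j:ℝ) = (n:ℝ) - (m:ℝ) := by
      have hh : j + m = n := by omega
      have := congrArg (fun t : ℕ => (t:ℝ)) hh
      push_cast at this
      linarith
    have hy : 1 - (j:ℝ)/(n:ℝ) = (m:ℝ)/(n:ℝ) := by
      rw [hjr, sub_div, div_self hnne]; ring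
    have hy0 : (0:ℝ) < (m:ℝ)/(n:ℝ) := by positivity
    have hB0 : (0:ℝ) ≤ Real.exp 1 * (n:ℝ)^2/(2*(m:ℝ)) := by positivity
    have hbase : (n:ℝ) ^ (1 - (j:ℝ)/(n:ℝ)) * kappa ((j:ℝ)/(n:ℝ))
        = (Real.exp 1 * (n:ℝ)^2/(2*(m:ℝ))) ^ ((m:ℝ)/(n:ℝ)) := by
      unfold kappa
      rw [hy]
      rw [Real.rpow_neg hy0.le, ← Real.inv_rpow hy0.le]
      rw [← Real.mul_rpow (by positivity) (by positivity)]
      rw [← Real.mul_rpow (by positivity) (by positivity)]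
      congr 1
      rw [inv_div]
      ring
    rw [hbase, ← Real.rpow_natCast ((Real.exp 1 * (n:ℝ)^2/(2*(m:ℝ))) ^ ((m:ℝ)/(n:ℝ))) n,
      ← Real.rpow_mul hB0,
      show (m:ℝ)/(n:ℝ) * ((n:ℕ):ℝ) = ((m:ℕ):ℝ) by rw [div_mul_cancel₀ _ hnne],
      Real.rpow_natCast]
  constructor
  · rw [hBpow]
    exact hlower
  · rw [hBpow]
    exact hupper
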